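/- Let G=(V,E) be a finite simple graph with n := |V|, let (A,B) be a partition of V, and let k be a positive integer. Let G' be the graph obtained from G by adding a set Z of n + 2k new isolated vertices, let Z_A ⊆ Z with |Z_A| = |B| + k, and set X := A ∪ Z_A and Y := B ∪ (Z\Z_A). Then: (i) |X| = |Y|, i.e., (X,Y) is a balanced partition of V ∪ Z; (ii) for every partition (X',Y') of V ∪ Z, the set of cut edges of G' with respect to (X',Y') equals E(X' ∩ V, Y' ∩ V), the set of edges of G with one endpoint in X' ∩ V and one in Y' ∩ V; and (iii) if there is a partition (A',B') of V with |E(A',B')| > |E(A,B)| and |A ⊕ A'| ≤ k, then there is a balanced partition (X',Y') of V ∪ Z with strictly more cut edges in G' than (X,Y) and with |X ⊕ X'| ≤ 2k. -/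
import Mathlib


open Finset
open scoped Classical

/-- The cut edges of the partition `(X,Y)` in the graph `H`: the edges of `H`
with one endpoint in `X` and one endpoint in `Y`. -/
noncomputable def cutEdges {W : Type*} [Fintype W] (H : SimpleGraph W)
    (X Y : Finset W) : Finset (Sym2 W) :=
  H.edgeFinset.filter fun e => (∃ x ∈ e, x ∈ X) ∧ (∃ y ∈ e, y ∈ Y)

lemma cutEdges_map' {V W : Type*} [Fintype V] [Fintype W] [DecidableEq W]
    (G : SimpleGraph V) (f : V ↪ W) (X' Y' : Finset W) :
    cutEdges (G.map f) X' Y' =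
      (cutEdges G (Finset.univ.filter fun v => f v ∈ X')
          (Finset.univ.filter fun v => f v ∈ Y')).image (Sym2.map f) := by
  ext e
  simp only [cutEdges, Finset.mem_filter, SimpleGraph.mem_edgeFinset, Finset.mem_image,
    Finset.mem_univ, true_and]
  constructor
  · rintro ⟨he, hP⟩
    induction e using Sym2.ind with
    | _ u v =>
      rw [SimpleGraph.mem_edgeSet, SimpleGraph.map_adj] at he
      obtain ⟨a, b, hab, rfl, rfl⟩ := he
      refine ⟨s(a, b), ⟨(G.mem_edgeSet).mpr hab, ?_⟩, Sym2.map_pair_eq f a b⟩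
      simp only [Sym2.mem_iff] at hP ⊢
      constructor
      · obtain ⟨x, hx1, hx2⟩ := hP.1
        rcases hx1 with rfl | rfl
        · exact ⟨a, Or.inl rfl, hx2⟩
        · exact ⟨b, Or.inr rfl, hx2⟩
      · obtain ⟨y, hy1, hy2⟩ := hP.2
        rcases hy1 with rfl | rfl
        · exact ⟨a, Or.inl rfl, hy2⟩
        · exact ⟨b, Or.inr rfl, hy2⟩
  · rintro ⟨e', ⟨he', hx, hy⟩, rfl⟩
    constructor
    · induction e' using Sym2.ind with
      | _ a b =>
        rw [Sym2.map_pair_eq, SimpleGraph.mem_edgeSet, SimpleGraph.map_adj]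
        exact ⟨a, b, (G.mem_edgeSet).mp he', rfl, rfl⟩
    · obtain ⟨x, hx1, hx2⟩ := hx
      obtain ⟨y, hy1, hy2⟩ := hy
      exact ⟨⟨f x, Sym2.mem_map.mpr ⟨x, hx1, rfl⟩, hx2⟩,
             ⟨f y, Sym2.mem_map.mpr ⟨y, hy1, rfl⟩, hy2⟩⟩

lemma disj_inl_inr {V W : Type*} [DecidableEq V] [DecidableEq W]
    (s : Finset V) (t : Finset W) :
    Disjoint (s.image (Sum.inl : V → V ⊕ W)) (t.image Sum.inr) := by
  rw [Finset.disjoint_left]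
  rintro x hx hy
  simp only [Finset.mem_image] at hx hy
  obtain ⟨v, _, rfl⟩ := hx
  obtain ⟨z, _, h⟩ := hy
  exact (Sum.inr_ne_inl h)

lemma card_union_images {V W : Type*} [DecidableEq V] [DecidableEq W]
    (s : Finset V) (t : Finset W) :
    (s.image (Sum.inl : V → V ⊕ W) ∪ t.image Sum.inr).card = s.card + t.card := by
  rw [Finset.card_union_of_disjoint (disj_inl_inr s t),
    Finset.card_image_of_injective _ Sum.inl_injective,
    Finset.card_image_of_injective _ Sum.inr_injective]

/-- Reduction from `LS Max Cut` to `LS Max Bisection`: add a set `Z` of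
`n + 2k` isolated vertices to `G` (yielding `G'`), and balance the starting
partition using a set `Z_A ⊆ Z` of `|B| + k` of them. Then (i) the resulting
partition `(X,Y)` is balanced, (ii) the cut of `G'` with respect to any
partition `(X',Y')` consists precisely of the `G`-edges between `X' ∩ V` and
`Y' ∩ V`, and (iii) any improving `k`-flip for `(A,B)` in `G` yields an
improving balanced partition within flip distance `2k` of `(X,Y)` in `G'`. -/
theorem bisection_reduction
    {V : Type*} [Fintype V] [DecidableEq V] (G : SimpleGraph V)
    (k : ℕ) (hk : 1 ≤ k)
    (A B : Finset V) (hdisj : Disjoint A B) (hcover : A ∪ B = Finset.univ)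
    (Z_A : Finset (Fin (Fintype.card V + 2 * k)))
    (hZA : Z_A.card = B.card + k) :
    let G' : SimpleGraph (V ⊕ Fin (Fintype.card V + 2 * k)) :=
      G.map Function.Embedding.inl
    let X : Finset (V ⊕ Fin (Fintype.card V + 2 * k)) :=
      A.image Sum.inl ∪ Z_A.image Sum.inr
    let Y : Finset (V ⊕ Fin (Fintype.card V + 2 * k)) :=
      B.image Sum.inl ∪ (Finset.univ \ Z_A).image Sum.inr
    -- (i) `(X,Y)` is a balanced partition
    (X.card = Y.card) ∧
    -- (ii) the cut edges of `G'` w.r.t. any partition `(X',Y')` are exactly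
    -- the edges of `G` between `X' ∩ V` and `Y' ∩ V`
    (∀ X' Y' : Finset (V ⊕ Fin (Fintype.card V + 2 * k)),
      Disjoint X' Y' → X' ∪ Y' = Finset.univ →
      cutEdges G' X' Y' =
        (cutEdges G (Finset.univ.filter fun v => Sum.inl v ∈ X')
            (Finset.univ.filter fun v => Sum.inl v ∈ Y')).image
          (Sym2.map Sum.inl)) ∧
    -- (iii)
    ((∃ A' B' : Finset V, Disjoint A' B' ∧ A' ∪ B' = Finset.univ ∧
        (cutEdges G A B).card < (cutEdges G A' B').card ∧
        (symmDiff A A').card ≤ k) →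
      ∃ X' Y' : Finset (V ⊕ Fin (Fintype.card V + 2 * k)),
        Disjoint X' Y' ∧ X' ∪ Y' = Finset.univ ∧
        X'.card ≤ Y'.card + 1 ∧ Y'.card ≤ X'.card + 1 ∧
        (cutEdges G' X Y).card < (cutEdges G' X' Y').card ∧
        (symmDiff X X').card ≤ 2 * k) := by
  intro G' X Y
  have hG' : G' = G.map Function.Embedding.inl := rfl
  have hX : X = A.image Sum.inl ∪ Z_A.image Sum.inr := rfl
  have hY : Y = B.image Sum.inl ∪ (Finset.univ \ Z_A).image Sum.inr := rfl
  clear_value G' X Y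
  subst hG' hX hY
  have hN : True := trivial
  have hn : A.card + B.card = Fintype.card V := by
    rw [← Finset.card_union_of_disjoint hdisj, hcover, Finset.card_univ]
  have hZAle : Z_A.card ≤ Fintype.card V + 2 * k :=
    le_trans (Finset.card_le_card (Finset.subset_univ _)) (by simp)
  -- key: cut-card transfer
  have hinj : Function.Injective
      (Sym2.map (⇑(Function.Embedding.inl : V ↪ V ⊕ Fin (Fintype.card V + 2 * k)))) :=
    Sym2.map.injective Sum.inl_injective
  have key : ∀ (S T : Finset (V ⊕ Fin (Fintype.card V + 2 * k))) (C D : Finset V),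
      (Finset.univ.filter fun v => Sum.inl v ∈ S) = C →
      (Finset.univ.filter fun v => Sum.inl v ∈ T) = D →
      (cutEdges (G.map Function.Embedding.inl) S T).card = (cutEdges G C D).card := by
    intro S T C D hC hD
    rw [cutEdges_map' G Function.Embedding.inl S T]
    rw [Finset.card_image_of_injective _ hinj,
      show (Finset.univ.filter fun v =>
          (Function.Embedding.inl : V ↪ V ⊕ Fin (Fintype.card V + 2 * k)) v ∈ S) = C from hC,
      show (Finset.univ.filter fun v =>
          (Function.Embedding.inl : V ↪ V ⊕ Fin (Fintype.card V + 2 * k)) v ∈ T) = D from hD]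
  have hfilter : ∀ (C : Finset V) (Zc : Finset (Fin (Fintype.card V + 2 * k))),
      (Finset.univ.filter fun v => Sum.inl v ∈ C.image Sum.inl ∪ Zc.image Sum.inr) = C := by
    intro C Zc
    ext v
    simp
  refine ⟨?_, ?_, ?_⟩
  · -- (i)
    rw [card_union_images, card_union_images, Finset.card_sdiff_of_subset (Finset.subset_univ _),
      Finset.card_univ]
    simp only [Fintype.card_fin]
    omega
  · -- (ii)
    intro X' Y' _ _
    exact cutEdges_map' G Function.Embedding.inl X' Y'
  · -- (iii)
    rintro ⟨A', B', hdisj', hcover', hcut, hflip⟩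
    have hn' : A'.card + B'.card = Fintype.card V := by
      rw [← Finset.card_union_of_disjoint hdisj', hcover', Finset.card_univ]
    have hsubAA' : A ⊆ A' ∪ symmDiff A A' := by
      intro a ha
      by_cases h : a ∈ A' <;> simp [Finset.mem_symmDiff, h, ha]
    have hsubA'A : A' ⊆ A ∪ symmDiff A A' := by
      intro a ha
      by_cases h : a ∈ A <;> simp [Finset.mem_symmDiff, h, ha]
    have hAle : A.card ≤ A'.card + (symmDiff A A').card :=
      le_trans (Finset.card_le_card hsubAA') (Finset.card_union_le _ _)
    have hA'le : A'.card ≤ A.card + (symmDiff A A').card :=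
      le_trans (Finset.card_le_card hsubA'A) (Finset.card_union_le _ _)
    -- choose Z'
    obtain ⟨Z', hZ'card, hZ'sd⟩ : ∃ Z' : Finset (Fin (Fintype.card V + 2 * k)),
        Z'.card = B'.card + k ∧ (symmDiff Z_A Z').card ≤ k := by
      rcases le_total A'.card A.card with hle | hle
      · obtain ⟨Z', hsub, hcard⟩ := Finset.exists_superset_card_eq
          (s := Z_A) (n := Z_A.card + (A.card - A'.card)) (by omega)
          (by simp only [Fintype.card_fin]; omega)
        refine ⟨Z', by omega, ?_⟩
        rw [symmDiff_of_le hsub, Finset.card_sdiff_of_subset hsub]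
        omega
      · obtain ⟨Z', hsub, hcard⟩ := Finset.exists_subset_card_eq
          (s := Z_A) (n := Z_A.card - (A'.card - A.card)) (by omega)
        refine ⟨Z', by omega, ?_⟩
        rw [symmDiff_of_ge hsub, Finset.card_sdiff_of_subset hsub]
        omega
    have hZ'le : Z'.card ≤ Fintype.card V + 2 * k :=
      le_trans (Finset.card_le_card (Finset.subset_univ _)) (by simp)
    refine ⟨A'.image Sum.inl ∪ Z'.image Sum.inr,
      B'.image Sum.inl ∪ (Finset.univ \ Z').image Sum.inr, ?_, ?_, ?_, ?_, ?_, ?_⟩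
    · -- disjoint
      rw [Finset.disjoint_left]
      rintro x hx hy
      rcases x with v | z
      · simp only [Finset.mem_union, Finset.mem_image] at hx hy
        have hv : v ∈ A' := by
          rcases hx with h | h
          · obtain ⟨a, ha, he⟩ := h; cases he; exact ha
          · obtain ⟨a, _, he⟩ := h; exact absurd he (Sum.inr_ne_inl)
        have hv' : v ∈ B' := by
          rcases hy with h | h
          · obtain ⟨a, ha, he⟩ := h; cases he; exact ha
          · obtain ⟨a, _, he⟩ := h; exact absurd he (Sum.inr_ne_inl)
        exact Finset.disjoint_left.mp hdisj' hv hv'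
      · simp only [Finset.mem_union, Finset.mem_image] at hx hy
        have hz : z ∈ Z' := by
          rcases hx with h | h
          · obtain ⟨a, _, he⟩ := h; exact absurd he (Sum.inl_ne_inr)
          · obtain ⟨a, ha, he⟩ := h; cases he; exact ha
        have hz' : z ∈ Finset.univ \ Z' := by
          rcases hy with h | h
          · obtain ⟨a, _, he⟩ := h; exact absurd he (Sum.inl_ne_inr)
          · obtain ⟨a, ha, he⟩ := h; cases he; exact ha
        exact (Finset.mem_sdiff.mp hz').2 hz
    · -- cover
      ext x
      simp only [Finset.mem_union, Finset.mem_image, Finset.mem_univ, iff_true]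
      rcases x with v | z
      · have hv := Finset.mem_union.mp (hcover'.symm ▸ Finset.mem_univ v)
        rcases hv with h | h
        · exact Or.inl (Or.inl ⟨v, h, rfl⟩)
        · exact Or.inr (Or.inl ⟨v, h, rfl⟩)
      · by_cases h : z ∈ Z'
        · exact Or.inl (Or.inr ⟨z, h, rfl⟩)
        · exact Or.inr (Or.inr ⟨z, Finset.mem_sdiff.mpr ⟨Finset.mem_univ z, h⟩, rfl⟩)
    · -- balance 1
      rw [card_union_images, card_union_images, Finset.card_sdiff_of_subset (Finset.subset_univ _),
        Finset.card_univ]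
      simp only [Fintype.card_fin]
      omega
    · -- balance 2
      rw [card_union_images, card_union_images, Finset.card_sdiff_of_subset (Finset.subset_univ _),
        Finset.card_univ]
      simp only [Fintype.card_fin]
      omega
    · -- cut improvement
      rw [key _ _ A B (hfilter A Z_A) ?hYB, key _ _ A' B' (hfilter A' Z') ?hY'B']
      · exact hcut
      case hYB =>
        ext v
        simp
      case hY'B' =>
        ext v
        simp
    · -- flip distance
      have hsub : symmDiff (A.image Sum.inl ∪ Z_A.image Sum.inr)
          (A'.image Sum.inl ∪ Z'.image Sum.inr) ⊆
          (symmDiff A A').image Sum.inl ∪ (symmDiff Z_A Z').image Sum.inr := by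
        intro x hx
        rw [Finset.mem_symmDiff] at hx
        simp only [Finset.mem_union, Finset.mem_image] at hx ⊢
        rcases x with v | z
        · left
          refine ⟨v, ?_, rfl⟩
          rw [Finset.mem_symmDiff]
          rcases hx with ⟨h1, h2⟩ | ⟨h1, h2⟩
          · left
            constructor
            · rcases h1 with h | h
              · obtain ⟨a, ha, he⟩ := h; cases he; exact ha
              · obtain ⟨a, _, he⟩ := h; exact absurd he Sum.inr_ne_inl
            · intro hv; exact h2 (Or.inl ⟨v, hv, rfl⟩)
          · right
            constructor
            · rcases h1 with h | h
              · obtain ⟨a, ha, he⟩ := h; cases he; exact ha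
              · obtain ⟨a, _, he⟩ := h; exact absurd he Sum.inr_ne_inl
            · intro hv; exact h2 (Or.inl ⟨v, hv, rfl⟩)
        · right
          refine ⟨z, ?_, rfl⟩
          rw [Finset.mem_symmDiff]
          rcases hx with ⟨h1, h2⟩ | ⟨h1, h2⟩
          · left
            constructor
            · rcases h1 with h | h
              · obtain ⟨a, _, he⟩ := h; exact absurd he Sum.inl_ne_inr
              · obtain ⟨a, ha, he⟩ := h; cases he; exact ha
            · intro hz; exact h2 (Or.inr ⟨z, hz, rfl⟩)
          · right
            constructor
            · rcases h1 with h | h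
              · obtain ⟨a, _, he⟩ := h; exact absurd he Sum.inl_ne_inr
              · obtain ⟨a, ha, he⟩ := h; cases he; exact ha
            · intro hz; exact h2 (Or.inr ⟨z, hz, rfl⟩)
      calc (symmDiff (A.image Sum.inl ∪ Z_A.image Sum.inr)
              (A'.image Sum.inl ∪ Z'.image Sum.inr)).card
          ≤ ((symmDiff A A').image Sum.inl ∪ (symmDiff Z_A Z').image Sum.inr).card :=
            Finset.card_le_card hsub
        _ = (symmDiff A A').card + (symmDiff Z_A Z').card := card_union_images _ _
        _ ≤ 2 * k := by omega
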